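/- Let M be an additive abelian group, let B be a commutative ring with an M-grading B = ⊕_{m∈M} B_m, and let I ⊆ B be a homogeneous ideal such that I₀ := I ∩ B₀ is contained in the Jacobson radical of the subring B₀. Let E and F be finitely generated M-graded B-modules with F projective as a B-module, and let u : E → F be a graded B-linear map (i.e. u(E_m) ⊆ F_m for all m ∈ M). Then u is bijective if and only if the induced B-linear map E/IE → F/IF is bijective. -/

import Mathlib

set_option synthInstance.maxHeartbeats 1000000
set_option maxHeartbeats 1000000


section Key
variable {M : Type*} [AddCommGroup M] [DecidableEq M]
    {B : Type*} [CommRing B] (𝒜 : M → AddSubgroup B) [GradedRing 𝒜]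
    {E : Type*} [AddCommGroup E] [Module B E]
    (ℰ : M → AddSubgroup E) [SetLike.GradedSMul 𝒜 ℰ] [DirectSum.Decomposition ℰ]

theorem gn_decompose_smul (a : B) {e : M} {y : E} (hy : y ∈ ℰ e) (d : M) :
    (DirectSum.decompose ℰ (a • y) d : E) = (DirectSum.decompose 𝒜 a (d - e) : B) • y := by
  induction a using DirectSum.Decomposition.inductionOn 𝒜 with
  | zero => simp
  | @homogeneous m a =>
      have hmem : (a : B) • y ∈ ℰ (m + e) := by
        simpa using SetLike.GradedSMul.smul_mem a.2 hy
      by_cases hd : d = m + e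
      · subst hd
        rw [DirectSum.decompose_of_mem_same ℰ hmem,
          DirectSum.decompose_of_mem_same 𝒜 (show (a : B) ∈ 𝒜 (m + e - e) by
            simpa using a.2)]
      · rw [DirectSum.decompose_of_mem_ne ℰ hmem (Ne.symm hd),
          DirectSum.decompose_of_mem_ne 𝒜 a.2 (by
            intro h; exact hd (by rw [h, sub_add_cancel])), zero_smul]
  | add b c hb hc =>
      simp only [add_smul, DirectSum.decompose_add, DirectSum.add_apply,
        AddSubgroup.coe_add, hb, hc]

theorem gn_key (I : Ideal B) (hI : I.IsHomogeneous 𝒜)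
    (hI0 : Ideal.comap ((SetLike.GradeZero.subring 𝒜).subtype : (𝒜 0) →+* B) I ≤
      Ideal.jacobson (⊥ : Ideal (𝒜 0))) :
    ∀ S : Finset E, (∀ y ∈ S, SetLike.IsHomogeneousElem ℰ y) →
      ∀ P : Submodule B E, (∀ (m : M) (x : E), x ∈ P → (DirectSum.decompose ℰ x m : E) ∈ P) →
      Submodule.span B (S : Set E) ≤ P ⊔ I • Submodule.span B (S : Set E) →
      Submodule.span B (S : Set E) ≤ P := by
  classical
  intro S
  induction S using Finset.strongInduction with
  | _ S IH =>
    intro hS P hP hle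
    rcases S.eq_empty_or_nonempty with rfl | ⟨x, hxS⟩
    · simp
    set S' := S.erase x with hS'def
    have hcoe : ∀ y, y ∈ S → y ≠ x → y ∈ S' := fun y hy hne => Finset.mem_erase.mpr ⟨hne, hy⟩
    have hS'sub : (S' : Set E) ⊆ (S : Set E) := by
      intro y hy; exact Finset.mem_coe.mpr (Finset.mem_of_mem_erase (Finset.mem_coe.mp hy))
    -- main claim: x ∈ P ⊔ span S'
    have hxP : x ∈ P ⊔ Submodule.span B (S' : Set E) := by
      by_cases hx0 : x = 0
      · exact hx0 ▸ Submodule.zero_mem _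
      obtain ⟨d, hd⟩ := hS x hxS
      have hxmem : x ∈ P ⊔ I • Submodule.span B (S : Set E) :=
        hle (Submodule.subset_span hxS)
      rw [Submodule.mem_sup] at hxmem
      obtain ⟨p, hp, z, hz, hpz⟩ := hxmem
      have hz' : z ∈ I • Submodule.span B (id '' (S : Set E)) := by rwa [Set.image_id]
      rw [Submodule.mem_ideal_smul_span_iff_exists_sum'] at hz'
      obtain ⟨a, ha, hsum⟩ := hz'
      -- degrees
      have hdeg : ∀ i : ↥(S : Set E), ∃ m, (i : E) ∈ ℰ m := fun i => hS i i.2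
      set deg : ↥(S : Set E) → M := fun i => (hdeg i).choose with hdegdef
      have hdegspec : ∀ i, (i : E) ∈ ℰ (deg i) := fun i => (hdeg i).choose_spec
      set b : ↥(S : Set E) → B :=
        fun i => (DirectSum.decompose 𝒜 (a i) (d - deg i) : B) with hbdef
      have hbI : ∀ i, b i ∈ I := fun i => hI _ (ha i)
      have hxS' : x ∈ (S : Set E) := Finset.mem_coe.mpr hxS
      set i₀ : ↥(S : Set E) := ⟨x, hxS'⟩ with hi₀def
      have hdi₀ : deg i₀ = d := DirectSum.degree_eq_of_mem_mem ℰ (hdegspec i₀) hd hx0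
      -- the component map
      set π : E →+ E :=
        { toFun := fun v => (DirectSum.decompose ℰ v d : E)
          map_zero' := by simp
          map_add' := fun v w => by
            simp [DirectSum.decompose_add, DirectSum.add_apply] } with hπdef
      have hπsmul : ∀ (i : ↥(S : Set E)) (c : B), π (c • (i : E)) =
          (DirectSum.decompose 𝒜 c (d - deg i) : B) • (i : E) :=
        fun i c => gn_decompose_smul 𝒜 ℰ c (hdegspec i) d
      have hzd : π z = ∑ i ∈ a.support, b i • (i : E) := by
        rw [← hsum, Finsupp.sum, map_sum]
        exact Finset.sum_congr rfl fun i _ => hπsmul i (a i)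
      have heq : x = π p + (b i₀ • x + ∑ i ∈ a.support.erase i₀, b i • (i : E)) := by
        have h1 : x = π x := (DirectSum.decompose_of_mem_same ℰ hd).symm
        have h2 : π x = π p + π z := by rw [← hpz, map_add]
        have h3 : ∑ i ∈ a.support, b i • (i : E) =
            b i₀ • x + ∑ i ∈ a.support.erase i₀, b i • (i : E) := by
          by_cases hi : i₀ ∈ a.support
          · exact (Finset.add_sum_erase _ _ hi).symm
          · rw [Finset.erase_eq_of_notMem hi]
            have ha0 : a i₀ = 0 := Finsupp.notMem_support_iff.mp hi
            have : b i₀ = 0 := by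
              show (DirectSum.decompose 𝒜 (a i₀) (d - deg i₀) : B) = 0
              rw [ha0]; simp
            rw [this, zero_smul, zero_add]
        conv_lhs => rw [h1, h2, hzd, h3]
      -- the grade-zero coefficient is in the Jacobson radical
      have h00 : d - deg i₀ = 0 := by rw [hdi₀, sub_self]
      have hb0mem : b i₀ ∈ 𝒜 0 := h00 ▸ (SetLike.coe_mem _)
      set q : (𝒜 0) := ⟨b i₀, hb0mem⟩ with hqdef
      have hbq : b i₀ = (q : B) := rfl
      have hqI : q ∈ Ideal.comap ((SetLike.GradeZero.subring 𝒜).subtype : (𝒜 0) →+* B) I := by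
        exact Ideal.mem_comap.mpr (hbI i₀)
      have hunit : IsUnit (1 - (q : B)) := by
        have h0 : IsUnit (q * (-1) + 1) := Ideal.mem_jacobson_bot.mp (hI0 hqI) (-1)
        have h1 : IsUnit (((q * (-1) + 1 : (𝒜 0)) : B)) :=
          h0.map ((SetLike.GradeZero.subring 𝒜).subtype : (𝒜 0) →+* B)
        have h2 : (((q * (-1) + 1 : (𝒜 0)) : B)) = 1 - (q : B) := by
          push_cast; ring
        rwa [h2] at h1
      obtain ⟨c, hc⟩ := hunit.exists_left_inv
      rw [hbq] at heq
      have hsub : (1 - (q : B)) • x =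
          π p + ∑ i ∈ a.support.erase i₀, b i • (i : E) := by
        rw [sub_smul, one_smul]
        nth_rewrite 1 [heq]
        abel
      have hx' : x = c • π p + ∑ i ∈ a.support.erase i₀, (c * b i) • (i : E) := by
        calc x = (c * (1 - (q : B))) • x := by rw [hc, one_smul]
          _ = c • ((1 - (q : B)) • x) := by rw [mul_smul]
          _ = c • (π p + ∑ i ∈ a.support.erase i₀, b i • (i : E)) := by rw [hsub]
          _ = c • π p + ∑ i ∈ a.support.erase i₀, (c * b i) • (i : E) := by
              rw [smul_add, Finset.smul_sum]
              simp only [smul_smul]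
      rw [hx']
      refine Submodule.add_mem _ (Submodule.mem_sup_left (P.smul_mem c ?_)) ?_
      · exact hP d p hp
      · refine Submodule.sum_mem _ fun i hi => ?_
        refine Submodule.mem_sup_right (Submodule.smul_mem _ _ (Submodule.subset_span ?_))
        have hne : (i : E) ≠ x := by
          intro h
          exact (Finset.mem_erase.mp hi).1 (Subtype.ext h)
        exact Finset.mem_coe.mpr (hcoe _ (Finset.mem_coe.mp i.2) hne)
    -- finish by induction
    have hspan2 : Submodule.span B (S : Set E) ≤ P ⊔ Submodule.span B (S' : Set E) := by
      rw [Submodule.span_le]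
      intro y hy
      by_cases hyx : y = x
      · exact hyx ▸ hxP
      · exact Submodule.mem_sup_right
          (Submodule.subset_span (Finset.mem_coe.mpr (hcoe _ (Finset.mem_coe.mp hy) hyx)))
    have hS'le : Submodule.span B (S' : Set E) ≤ P ⊔ I • Submodule.span B (S' : Set E) := by
      calc Submodule.span B (S' : Set E) ≤ Submodule.span B (S : Set E) :=
            Submodule.span_mono hS'sub
        _ ≤ P ⊔ I • Submodule.span B (S : Set E) := hle
        _ ≤ P ⊔ I • (P ⊔ Submodule.span B (S' : Set E)) :=
            sup_le_sup_left (Submodule.smul_mono le_rfl hspan2) _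
        _ ≤ P ⊔ I • Submodule.span B (S' : Set E) := by
            rw [Submodule.smul_sup]
            refine sup_le le_sup_left (sup_le (le_trans ?_ le_sup_left) le_sup_right)
            exact Submodule.smul_le_right
    have hIH : Submodule.span B (S' : Set E) ≤ P :=
      IH S' (Finset.erase_ssubset hxS) (fun y hy => hS y (Finset.mem_of_mem_erase hy)) P hP hS'le
    exact hspan2.trans (sup_le le_rfl hIH)
end Key

section Aux2
variable {M : Type*} [DecidableEq M]
    {B : Type*} [CommRing B]
    {E : Type*} [AddCommGroup E] [Module B E]
    (ℰ : M → AddSubgroup E) [DirectSum.Decomposition ℰ]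
    {F : Type*} [AddCommGroup F] [Module B F]
    (ℱ : M → AddSubgroup F) [DirectSum.Decomposition ℱ]

/-- A graded map commutes with taking homogeneous components. -/
theorem gn_decompose_map (u : E →ₗ[B] F) (hu : ∀ m : M, ∀ x ∈ ℰ m, u x ∈ ℱ m)
    (x : E) (d : M) :
    (DirectSum.decompose ℱ (u x) d : F) = u (DirectSum.decompose ℰ x d : E) := by
  induction x using DirectSum.Decomposition.inductionOn ℰ with
  | zero => simp
  | @homogeneous m a =>
      by_cases hd : d = m
      · subst hd
        rw [DirectSum.decompose_of_mem_same ℱ (hu d a a.2),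
          DirectSum.decompose_of_mem_same ℰ a.2]
      · rw [DirectSum.decompose_of_mem_ne ℱ (hu m a a.2) (Ne.symm hd),
          DirectSum.decompose_of_mem_ne ℰ a.2 (Ne.symm hd), map_zero]
  | add b c hb hc =>
      simp only [map_add, DirectSum.decompose_add, DirectSum.add_apply,
        AddSubgroup.coe_add, hb, hc]

/-- A f.g. submodule closed under homogeneous components is spanned by
finitely many homogeneous elements. -/
theorem gn_exists_homog_gens (N : Submodule B E)
    (hN : ∀ (m : M) (x : E), x ∈ N → (DirectSum.decompose ℰ x m : E) ∈ N)
    (hfg : N.FG) :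
    ∃ S : Finset E, (∀ y ∈ S, SetLike.IsHomogeneousElem ℰ y) ∧
      Submodule.span B (S : Set E) = N := by
  classical
  obtain ⟨T, hT⟩ := hfg
  refine ⟨T.biUnion fun t =>
    (DirectSum.decompose ℰ t).support.image fun m => (DirectSum.decompose ℰ t m : E),
    ?_, le_antisymm ?_ ?_⟩
  · intro y hy
    simp only [Finset.mem_biUnion, Finset.mem_image] at hy
    obtain ⟨t, _, m, _, rfl⟩ := hy
    exact ⟨m, SetLike.coe_mem _⟩
  · rw [Submodule.span_le]
    intro y hy
    simp only [Finset.coe_biUnion, Set.mem_iUnion, Finset.mem_coe, Finset.coe_image,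
      Set.mem_image] at hy
    obtain ⟨t, ht, m, _, rfl⟩ := hy
    exact hN m t (hT ▸ Submodule.subset_span ht)
  · rw [← hT, Submodule.span_le]
    intro t ht
    rw [← DirectSum.sum_support_decompose ℰ t]
    refine Submodule.sum_mem _ fun m hm => Submodule.subset_span ?_
    simp only [Finset.coe_biUnion, Set.mem_iUnion, Finset.mem_coe, Finset.coe_image,
      Set.mem_image]
    exact ⟨t, ht, m, hm, rfl⟩
end Aux2



/-- Graded Nakayama, second form: let `B` be a commutative ring graded by an
abelian group `M`, and let `I ⊆ B` be a homogeneous ideal with `I₀ = I ∩ B₀`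
contained in the Jacobson radical of the subring `B₀ = 𝒜 0`. Let `E` and `F` be
finitely generated `M`-graded `B`-modules with `F` projective over `B`, and let
`u : E → F` be a graded `B`-linear map. Then `u` is bijective if and only if the
induced map `E/IE → F/IF` is bijective. -/
theorem graded_nakayama_bijective_iff
    {M : Type*} [AddCommGroup M] [DecidableEq M]
    {B : Type*} [CommRing B] (𝒜 : M → AddSubgroup B) [GradedRing 𝒜]
    (I : Ideal B) (hI : Ideal.IsHomogeneous 𝒜 I)
    (hI0 : Ideal.comap ((SetLike.GradeZero.subring 𝒜).subtype : (𝒜 0) →+* B) I ≤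
      Ideal.jacobson (⊥ : Ideal (𝒜 0)))
    {E : Type*} [AddCommGroup E] [Module B E]
    (ℰ : M → AddSubgroup E) [SetLike.GradedSMul 𝒜 ℰ] [DirectSum.Decomposition ℰ]
    [Module.Finite B E]
    {F : Type*} [AddCommGroup F] [Module B F]
    (ℱ : M → AddSubgroup F) [SetLike.GradedSMul 𝒜 ℱ] [DirectSum.Decomposition ℱ]
    [Module.Finite B F] [Module.Projective B F]
    (u : E →ₗ[B] F) (hu : ∀ m : M, ∀ x ∈ ℰ m, u x ∈ ℱ m) :
    Function.Bijective u ↔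
      Function.Bijective (Submodule.mapQ (I • (⊤ : Submodule B E))
        (I • (⊤ : Submodule B F)) u (by
          rw [← Submodule.map_le_iff_le_comap, Submodule.map_smul'']
          exact Submodule.smul_mono le_rfl le_top)) := by
  classical
  constructor
  · intro hbij
    constructor
    · intro q1 q2 h
      obtain ⟨e1, rfl⟩ := Submodule.Quotient.mk_surjective _ q1
      obtain ⟨e2, rfl⟩ := Submodule.Quotient.mk_surjective _ q2
      rw [Submodule.mapQ_apply, Submodule.mapQ_apply] at h
      rw [Submodule.Quotient.eq] at h ⊢
      have hIF : I • (⊤ : Submodule B F) = Submodule.map u (I • ⊤) := by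
        rw [Submodule.map_smul'', Submodule.map_top, LinearMap.range_eq_top.mpr hbij.2]
      rw [hIF] at h
      obtain ⟨e, he, heq⟩ := h
      have : e = e1 - e2 := hbij.1 (by rw [heq, map_sub])
      rwa [← this]
    · intro q
      obtain ⟨f, rfl⟩ := Submodule.Quotient.mk_surjective _ q
      obtain ⟨e, rfl⟩ := hbij.2 f
      exact ⟨Submodule.Quotient.mk e, by rw [Submodule.mapQ_apply]⟩
  · intro hbij
    -- surjectivity
    have hsurrange : (⊤ : Submodule B F) ≤ LinearMap.range u ⊔ I • ⊤ := by
      intro f _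
      obtain ⟨q, hq⟩ := hbij.2 (Submodule.Quotient.mk f)
      obtain ⟨e, rfl⟩ := Submodule.Quotient.mk_surjective _ q
      rw [Submodule.mapQ_apply] at hq
      have h2 : u e - f ∈ I • (⊤ : Submodule B F) := (Submodule.Quotient.eq _).mp hq
      exact Submodule.mem_sup.mpr ⟨u e, ⟨e, rfl⟩, -(u e - f), neg_mem h2, by abel⟩
    have hrangegr : ∀ (m : M) (x : F), x ∈ LinearMap.range u →
        (DirectSum.decompose ℱ x m : F) ∈ LinearMap.range u := by
      rintro m x ⟨e, rfl⟩
      exact ⟨(DirectSum.decompose ℰ e m : E), (gn_decompose_map ℰ ℱ u hu e m).symm⟩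
    obtain ⟨S, hShom, hSspan⟩ := gn_exists_homog_gens ℱ ⊤ (fun _ _ _ => trivial)
      (Module.Finite.fg_top (R := B) (M := F))
    have hsur : Function.Surjective u := by
      have hle : Submodule.span B (S : Set F) ≤ LinearMap.range u := by
        refine gn_key 𝒜 ℱ I hI hI0 S hShom _ hrangegr ?_
        rw [hSspan]
        exact hsurrange
      rw [hSspan] at hle
      exact LinearMap.range_eq_top.mp (top_le_iff.mp hle)
    -- splitting
    obtain ⟨s, hs⟩ := Module.projective_lifting_property u LinearMap.id hsur
    set pmap : E →ₗ[B] E := LinearMap.id - s ∘ₗ u with hpdef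
    have hpker : ∀ e, u (pmap e) = 0 := by
      intro e
      have h1 : u (s (u e)) = u e := LinearMap.ext_iff.mp hs (u e)
      simp [hpdef, h1]
    have hpfix : ∀ e ∈ LinearMap.ker u, pmap e = e := by
      intro e he
      simp [hpdef, LinearMap.mem_ker.mp he]
    have hkerrange : LinearMap.ker u = LinearMap.range pmap := by
      refine le_antisymm (fun e he => ⟨e, hpfix e he⟩) ?_
      rintro e ⟨e', rfl⟩
      exact LinearMap.mem_ker.mpr (hpker e')
    have hkerI : LinearMap.ker u ≤ I • (⊤ : Submodule B E) := by
      intro e he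
      have h1 : (Submodule.mapQ (I • (⊤ : Submodule B E)) (I • (⊤ : Submodule B F)) u (by
          rw [← Submodule.map_le_iff_le_comap, Submodule.map_smul'']
          exact Submodule.smul_mono le_rfl le_top)) (Submodule.Quotient.mk e) = 0 := by
        rw [Submodule.mapQ_apply, LinearMap.mem_ker.mp he]
        simp
      have h2 : (Submodule.Quotient.mk e : E ⧸ I • (⊤ : Submodule B E)) = 0 :=
        hbij.1 (by rw [h1, map_zero])
      exact (Submodule.Quotient.mk_eq_zero _).mp h2
    have hker2 : LinearMap.ker u ≤ I • (LinearMap.ker u) := by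
      intro e he
      have h1 : e ∈ Submodule.map pmap (I • ⊤) :=
        ⟨e, hkerI he, hpfix e he⟩
      rw [Submodule.map_smul'', Submodule.map_top, ← hkerrange] at h1
      exact h1
    have hkergr : ∀ (m : M) (x : E), x ∈ LinearMap.ker u →
        (DirectSum.decompose ℰ x m : E) ∈ LinearMap.ker u := by
      intro m x hx
      have h1 := (gn_decompose_map ℰ ℱ u hu x m).symm
      rw [LinearMap.mem_ker.mp hx] at h1
      simp only [DirectSum.decompose_zero, DirectSum.zero_apply, ZeroMemClass.coe_zero] at h1
      exact LinearMap.mem_ker.mpr h1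
    have hkerfg : (LinearMap.ker u).FG := by
      rw [hkerrange, ← Submodule.map_top]
      exact Submodule.FG.map _ (Module.Finite.fg_top (R := B) (M := E))
    obtain ⟨T, hThom, hTspan⟩ := gn_exists_homog_gens ℰ (LinearMap.ker u) hkergr hkerfg
    have hbotgr : ∀ (m : M) (x : E), x ∈ (⊥ : Submodule B E) →
        (DirectSum.decompose ℰ x m : E) ∈ (⊥ : Submodule B E) := by
      intro m x hx
      rw [Submodule.mem_bot] at hx
      subst hx
      simp
    have hbot : Submodule.span B (T : Set E) ≤ ⊥ := by
      refine gn_key 𝒜 ℰ I hI hI0 T hThom ⊥ hbotgr ?_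
      rw [hTspan, bot_sup_eq]
      exact hker2
    have hinj : Function.Injective u := by
      rw [← LinearMap.ker_eq_bot, ← hTspan]
      exact le_bot_iff.mp hbot
    exact ⟨hinj, hsur⟩
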